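/- arXiv:2112.01139 — 5 statements merged into one kernel-verified Lean document; each statement's English description precedes it below -/
import Mathlib

section
/- The four two-qubit product vectors |φ₀⟩=|0⟩⊗|0⟩, |φ₁⟩=|0⟩⊗|1⟩, |φ₊⟩=|+⟩⊗|+⟩, |φ₋⟩=|−⟩⊗|−⟩ (where |±⟩=(|0⟩±|1⟩)/√2) form a basis of ℂ²⊗ℂ², and their unique reciprocal vectors (vectors |φ̃ᵢ⟩ satisfying ⟨φᵢ|φ̃ⱼ⟩=δᵢⱼ) are |φ̃₀⟩=√2|Φ₋⟩, |φ̃₁⟩=√2|Ψ₋⟩, |φ̃₊⟩=√2|1⟩⊗|+⟩, |φ̃₋⟩=−√2|1⟩⊗|−⟩, where |Φ₋⟩=(|00⟩−|11⟩)/√2 and |Ψ₋⟩=(|01⟩−|10⟩)/√2. -/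
open Matrix Complex
open scoped Matrix Kronecker ComplexOrder

noncomputable section

abbrev Q2 := Fin 2 → ℂ
abbrev V4 := Fin 2 × Fin 2 → ℂ
abbrev Op2 := Matrix (Fin 2) (Fin 2) ℂ
abbrev Op4 := Matrix (Fin 2 × Fin 2) (Fin 2 × Fin 2) ℂ

def ket0 : Q2 := ![1, 0]
def ket1 : Q2 := ![0, 1]
def ketP : Q2 := (Real.sqrt 2 : ℂ)⁻¹ • (ket0 + ket1)
def ketM : Q2 := (Real.sqrt 2 : ℂ)⁻¹ • (ket0 - ket1)

/-- tensor product of two qubit vectors -/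
def tens (a b : Q2) : V4 := fun p => a p.1 * b p.2

/-- rank-one projector |v⟩⟨v| on one qubit -/
def proj2 (v : Q2) : Op2 := Matrix.of fun i j => v i * star (v j)

/-- rank-one operator |v⟩⟨v| on two qubits -/
def proj (v : V4) : Op4 := Matrix.of fun i j => v i * star (v j)

/-- inner product ⟨u|v⟩ -/
def ip4 (u v : V4) : ℂ := star u ⬝ᵥ v

/-- expectation value ⟨u|M|u⟩ -/
def expVal (u : V4) (M : Op4) : ℂ := star u ⬝ᵥ (M *ᵥ u)

-- Bell states
def PhiP : V4 := (Real.sqrt 2 : ℂ)⁻¹ • (tens ket0 ket0 + tens ket1 ket1)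
def PhiM : V4 := (Real.sqrt 2 : ℂ)⁻¹ • (tens ket0 ket0 - tens ket1 ket1)
def PsiP : V4 := (Real.sqrt 2 : ℂ)⁻¹ • (tens ket0 ket1 + tens ket1 ket0)
def PsiM : V4 := (Real.sqrt 2 : ℂ)⁻¹ • (tens ket0 ket1 - tens ket1 ket0)

-- Example 1 states
def φ0 : V4 := tens ket0 ket0
def φ1 : V4 := tens ket0 ket1
def φP : V4 := tens ketP ketP
def φM : V4 := tens ketM ketM

-- Example 1 reciprocal vectors
def φt0 : V4 := (Real.sqrt 2 : ℂ) • PhiM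
def φt1 : V4 := (Real.sqrt 2 : ℂ) • PsiM
def φtP : V4 := (Real.sqrt 2 : ℂ) • tens ket1 ketP
def φtM : V4 := -((Real.sqrt 2 : ℂ) • tens ket1 ketM)

-- Example 2 states
def ψ0 : V4 := tens ket0 ket0
def ψ1 : V4 := tens ket0 ket1
def ψP : V4 := tens ketP ketP
def ψM : V4 := tens ketP ketM

-- Example 2 reciprocal vectors
def ψt0 : V4 := (Real.sqrt 2 : ℂ) • tens ketM ket0
def ψt1 : V4 := (Real.sqrt 2 : ℂ) • tens ketM ket1
def ψtP : V4 := (Real.sqrt 2 : ℂ) • tens ket1 ketP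
def ψtM : V4 := (Real.sqrt 2 : ℂ) • tens ket1 ketM

/-- prior probabilities η₀=η₁=γ/(2(1+γ)), η₊=η₋=1/(2(1+γ)) -/
def η (γ : ℝ) : Fin 4 → ℝ :=
  ![γ / (2 * (1 + γ)), γ / (2 * (1 + γ)), 1 / (2 * (1 + γ)), 1 / (2 * (1 + γ))]

lemma hs : (Real.sqrt 2:ℂ)*(Real.sqrt 2:ℂ) = 2 := by
  rw [← Complex.ofReal_mul, Real.mul_self_sqrt (by norm_num)]; norm_num

lemma hs0 : (Real.sqrt 2:ℂ) ≠ 0 := Complex.ofReal_ne_zero.mpr (by positivity)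

lemma recip (i j : Fin 4) :
    ip4 (![φ0,φ1,φP,φM] i) (![φt0,φt1,φtP,φtM] j) = if i=j then 1 else 0 := by
  fin_cases i <;> fin_cases j <;>
    simp [ip4, dotProduct, Fintype.sum_prod_type, Fin.sum_univ_succ, φ0, φ1, φP, φM,
      φt0, φt1, φtP, φtM, PhiM, PsiM, tens, ket0, ket1, ketP, ketM] <;>
    (try (field_simp [hs0]; first | linear_combination hs | linear_combination 2*hs | linear_combination -hs))

lemma key (w : V4) (h : ∀ i : Fin 4, ip4 (![φ0,φ1,φP,φM] i) w = 0) : w = 0 := by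
  have h0 := h 0; have h1 := h 1; have h2 := h 2; have h3 := h 3
  simp [ip4, dotProduct, Fintype.sum_prod_type, Fin.sum_univ_succ, φ0, φ1, φP, φM,
    tens, ket0, ket1, ketP, ketM] at h0 h1 h2 h3
  field_simp [hs0] at h2 h3
  simp only [mul_zero] at h2 h3
  funext p
  obtain ⟨a,b⟩ := p
  fin_cases a <;> fin_cases b <;> simp <;>
    first
    | linear_combination h0
    | linear_combination h1
    | linear_combination h2/2 - h3/2 - h1
    | linear_combination h2/2 + h3/2 - h0

lemma ip4_conj (u v : V4) : ip4 u v = starRingEnd ℂ (ip4 v u) := by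
  simp [ip4, dotProduct, Pi.star_apply, map_sum, mul_comm]

lemma ip4_sub (u a b : V4) : ip4 u (a - b) = ip4 u a - ip4 u b := by
  simp [ip4, dotProduct_sub]

/-- the four product vectors form a basis of ℂ²⊗ℂ² and the listed
vectors are their unique reciprocal vectors. -/
theorem stmt_0 :
    LinearIndependent ℂ ![φ0, φ1, φP, φM] ∧
    Submodule.span ℂ (Set.range ![φ0, φ1, φP, φM]) = ⊤ ∧
    (∀ i j : Fin 4,
      ip4 (![φ0, φ1, φP, φM] i) (![φt0, φt1, φtP, φtM] j) = if i = j then 1 else 0) ∧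
    (∀ ψ : Fin 4 → V4,
      (∀ i j : Fin 4, ip4 (![φ0, φ1, φP, φM] i) (ψ j) = if i = j then 1 else 0) →
        ψ = ![φt0, φt1, φtP, φtM]) := by
  have hli : LinearIndependent ℂ ![φ0, φ1, φP, φM] := by
    rw [Fintype.linearIndependent_iff]
    intro c hc j
    have hz : ip4 (![φt0,φt1,φtP,φtM] j) (∑ i : Fin 4, c i • ![φ0, φ1, φP, φM] i) = 0 := by
      rw [hc]; simp [ip4]
    rw [ip4] at hz
    simp only [Fin.sum_univ_four, dotProduct_add, dotProduct_smul,
      smul_eq_mul] at hz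
    have he : ∀ i : Fin 4, star (![φt0,φt1,φtP,φtM] j) ⬝ᵥ (![φ0, φ1, φP, φM] i)
        = if i = j then 1 else 0 := by
      intro i
      have := recip i j
      rw [ip4_conj] at this
      have : starRingEnd ℂ (ip4 (![φt0,φt1,φtP,φtM] j) (![φ0, φ1, φP, φM] i))
          = if i = j then 1 else 0 := this
      have := congrArg (starRingEnd ℂ) this
      simpa [ip4, apply_ite] using this
    rw [he 0, he 1, he 2, he 3] at hz
    fin_cases j <;> simpa using hz
  refine ⟨hli, ?_, recip, ?_⟩
  · apply hli.span_eq_top_of_card_eq_finrank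
    simp [Module.finrank_fintype_fun_eq_card]
  · intro ψ hψ
    funext j
    have : ψ j - ![φt0, φt1, φtP, φtM] j = 0 := by
      apply key
      intro i
      rw [ip4_sub, hψ i j, recip i j]
      ring
    have := sub_eq_zero.mp this
    simpa using this
end
end

section
/- For the ensemble |φ₀⟩=|00⟩, |φ₁⟩=|01⟩, |φ₊⟩=|+⟩⊗|+⟩, |φ₋⟩=|−⟩⊗|−⟩ with priors η₀=η₁=γ/(2(1+γ)), η₊=η₋=1/(2(1+γ)), γ≥2: the POVM M₊=|1⟩⟨1|⊗|+⟩⟨+|, M₋=|1⟩⟨1|⊗|−⟩⟨−|, M₀=M₁=0, M_?=|0⟩⟨0|⊗𝟙 is an unambiguous measurement (Tr(|φⱼ⟩⟨φⱼ|Mᵢ)=0 for i≠j) whose success probability equals 1/(2(1+γ)). -/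
open Matrix Complex
open scoped Matrix Kronecker ComplexOrder

noncomputable section

lemma proj_psd (v : V4) : (proj v).PosSemidef := by
  rw [Matrix.posSemidef_iff_dotProduct_mulVec]
  constructor
  · ext i j
    simp [proj, Matrix.conjTranspose_apply, mul_comm]
  · intro x
    have h1 : proj v *ᵥ x = (star v ⬝ᵥ x) • v := by
      ext i
      simp [proj, mulVec, dotProduct, Finset.sum_mul, mul_comm, mul_assoc, mul_left_comm,
        ← Finset.mul_sum]
    have h2 : star x ⬝ᵥ (proj v *ᵥ x) = star (star v ⬝ᵥ x) * (star v ⬝ᵥ x) := by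
      rw [h1, dotProduct_smul]
      simp [dotProduct, Finset.mul_sum, star_sum, mul_comm]
    rw [h2]
    exact star_mul_self_nonneg _

lemma kron_proj (a b : Q2) : proj2 a ⊗ₖ proj2 b = proj (tens a b) := by
  ext ⟨i, j⟩ ⟨k, l⟩
  simp [proj, proj2, tens, Matrix.kroneckerMap_apply]
  ring

lemma sqrt2_sq : (Real.sqrt 2 : ℂ) * (Real.sqrt 2 : ℂ) = 2 := by
  norm_cast
  exact Real.mul_self_sqrt (by norm_num)

lemma sqrt2_inv_sq : (Real.sqrt 2 : ℂ)⁻¹ * (Real.sqrt 2 : ℂ)⁻¹ = 2⁻¹ := by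
  rw [← mul_inv, sqrt2_sq]

lemma expVal_proj (u v : V4) : expVal u (proj v) = star (star v ⬝ᵥ u) * (star v ⬝ᵥ u) := by
  have h1 : proj v *ᵥ u = (star v ⬝ᵥ u) • v := by
    ext i
    simp only [mulVec, proj, dotProduct, Pi.smul_apply, smul_eq_mul, Matrix.of_apply,
      Finset.sum_mul]
    exact Finset.sum_congr rfl fun j _ => by simp; ring
  rw [expVal, h1, dotProduct_smul]
  simp [dotProduct, Finset.mul_sum, star_sum, mul_comm]

lemma dot_tens (a b c d : Q2) :
    star (tens a b) ⬝ᵥ tens c d = (star a ⬝ᵥ c) * (star b ⬝ᵥ d) := by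
  simp [tens, dotProduct, Fintype.sum_prod_type, Fin.sum_univ_two]
  ring

lemma expVal_zero (u : V4) : expVal u 0 = 0 := by simp [expVal]

lemma kron_id : proj2 ket0 ⊗ₖ (1 : Op2) = proj (tens ket0 ket0) + proj (tens ket0 ket1) := by
  ext ⟨i, j⟩ ⟨k, l⟩
  fin_cases i <;> fin_cases j <;> fin_cases k <;> fin_cases l <;>
    simp [proj, proj2, tens, ket0, ket1, Matrix.kroneckerMap_apply, Matrix.one_apply]

/-- the LOCC-implementable POVM M₊=|1⟩⟨1|⊗|+⟩⟨+|, M₋=|1⟩⟨1|⊗|−⟩⟨−|,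
M₀=M₁=0, M_?=|0⟩⟨0|⊗𝟙 is unambiguous for Example 1 with success probability 1/(2(1+γ)). -/
theorem stmt_7 (γ : ℝ) (hγ : 2 ≤ γ) :
    (proj2 ket1 ⊗ₖ proj2 ketP).PosSemidef ∧
    (proj2 ket1 ⊗ₖ proj2 ketM).PosSemidef ∧
    (proj2 ket0 ⊗ₖ (1 : Op2)).PosSemidef ∧
    (0 : Op4) + 0 + proj2 ket1 ⊗ₖ proj2 ketP + proj2 ket1 ⊗ₖ proj2 ketM
      + proj2 ket0 ⊗ₖ (1 : Op2) = 1 ∧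
    (∀ i j : Fin 4, i ≠ j →
      expVal (![φ0, φ1, φP, φM] j)
        (![0, 0, proj2 ket1 ⊗ₖ proj2 ketP, proj2 ket1 ⊗ₖ proj2 ketM] i) = 0) ∧
    (∑ i : Fin 4, ((η γ i : ℝ) : ℂ) *
        expVal (![φ0, φ1, φP, φM] i)
          (![0, 0, proj2 ket1 ⊗ₖ proj2 ketP, proj2 ket1 ⊗ₖ proj2 ketM] i))
      = ((1 / (2 * (1 + γ)) : ℝ) : ℂ) := by
  refine ⟨?_, ?_, ?_, ?_, ?_, ?_⟩
  · rw [kron_proj]; exact proj_psd _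
  · rw [kron_proj]; exact proj_psd _
  · rw [kron_id]; exact (proj_psd _).add (proj_psd _)
  · ext ⟨i, j⟩ ⟨k, l⟩
    fin_cases i <;> fin_cases j <;> fin_cases k <;> fin_cases l <;>
      simp [proj2, ket0, ket1, ketP, ketM, Matrix.kroneckerMap_apply, Matrix.one_apply,
        Prod.ext_iff, sqrt2_inv_sq, mul_add, mul_sub] <;>
      (try ring_nf) <;> (try simp [sqrt2_inv_sq]) <;> (try ring)
  · intro i j hij
    fin_cases i <;> fin_cases j <;> first
    | exact absurd rfl hij
    | (simp only [kron_proj]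
       simp [expVal_proj, expVal_zero, φ0, φ1, φP, φM, dot_tens, -mul_eq_zero,
         ket0, ket1, ketP, ketM, dotProduct, Fin.sum_univ_two]
       try ring_nf
       try simp
       try (left
            simp [tens, Fintype.sum_prod_type, Fin.sum_univ_two]
            try ring))
  · simp only [Fin.sum_univ_four, Matrix.cons_val_zero, Matrix.cons_val_one, Matrix.head_cons,
      Matrix.cons_val_two, Matrix.tail_cons, Matrix.cons_val_three, kron_proj, expVal_proj,
      φP, φM, dot_tens, η]
    simp [ket0, ket1, ketP, ketM, dotProduct, Fin.sum_univ_two, expVal_zero,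
      sqrt2_inv_sq, mul_add, mul_sub]
    ring_nf
    rw [show ((Real.sqrt 2 : ℂ))⁻¹ ^ 2 = 2⁻¹ by rw [sq, sqrt2_inv_sq]]
    push_cast
    have : (1:ℂ) + γ ≠ 0 := by
      have h0 : ((1 + γ : ℝ) : ℂ) ≠ 0 := Complex.ofReal_ne_zero.mpr (by linarith)
      push_cast at h0
      exact h0
    ring
end
end

section
/- Let γ≥2 and |ν±⟩ as above. The operators M₍₀,?₎=|ν₋⟩⟨ν₋|⊗|0⟩⟨0|, M₍₁,?₎=|ν₋⟩⟨ν₋|⊗|1⟩⟨1|, M₍?,₊₎=|ν₊⟩⟨ν₊|⊗|+⟩⟨+|, M₍?,₋₎=|ν₊⟩⟨ν₊|⊗|−⟩⟨−|, and all other five elements zero, form a POVM on ℂ²⊗ℂ² and satisfy the error-free condition with post-measurement information for the states |φ₀⟩=|00⟩, |φ₁⟩=|01⟩, |φ₊⟩=|+⟩⊗|+⟩, |φ₋⟩=|+⟩⊗|−⟩: ⟨φ₁|M₍₀,?₎|φ₁⟩=⟨φ₀|M₍₁,?₎|φ₀⟩=0 and ⟨φ₋|M₍?,₊₎|φ₋⟩=⟨φ₊|M₍?,₋₎|φ₊⟩=0.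 -/
open Matrix Complex
open scoped Matrix Kronecker ComplexOrder

noncomputable section

/-- |ν₊⟩ = √(1/2 − γ/(2√(1+γ²)))|0⟩ + √(1/2 + γ/(2√(1+γ²)))|1⟩ -/
def νp (γ : ℝ) : Q2 :=
  ![((Real.sqrt (1/2 - γ / (2 * Real.sqrt (1 + γ^2))) : ℝ) : ℂ),
    ((Real.sqrt (1/2 + γ / (2 * Real.sqrt (1 + γ^2))) : ℝ) : ℂ)]

/-- |ν₋⟩ = √(1/2 + γ/(2√(1+γ²)))|0⟩ − √(1/2 − γ/(2√(1+γ²)))|1⟩ -/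
def νm (γ : ℝ) : Q2 :=
  ![((Real.sqrt (1/2 + γ / (2 * Real.sqrt (1 + γ^2))) : ℝ) : ℂ),
    -((Real.sqrt (1/2 - γ / (2 * Real.sqrt (1 + γ^2))) : ℝ) : ℂ)]


lemma h2sq : ((Real.sqrt 2 : ℝ) : ℂ)^2 = 2 := by
  rw [← Complex.ofReal_pow, Real.sq_sqrt (by norm_num)]; norm_num

lemma proj_kron_psd (a b : Q2) : (proj2 a ⊗ₖ proj2 b).PosSemidef := by
  have h := Matrix.posSemidef_conjTranspose_mul_self
    (Matrix.replicateRow Unit (star (fun p : Fin 2 × Fin 2 => a p.1 * b p.2)))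
  convert h using 1
  ext i j
  simp [proj2, Matrix.mul_apply, kroneckerMap_apply]
  ring

lemma ket01 : proj2 ket0 + proj2 ket1 = 1 := by
  ext i j; fin_cases i <;> fin_cases j <;>
    simp [proj2, ket0, ket1, Matrix.one_apply]

lemma ketPM : proj2 ketP + proj2 ketM = 1 := by
  have h2n : ((Real.sqrt 2 : ℝ) : ℂ) ≠ 0 := by
    intro h; have := h ▸ h2sq; norm_num at this
  ext i j; fin_cases i <;> fin_cases j <;>
    simp [proj2, ketP, ketM, ket0, ket1, Matrix.one_apply] <;>
    (try field_simp) <;>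
    first
      | ring1
      | linear_combination h2sq
      | linear_combination -h2sq
      | linear_combination (2:ℂ)*h2sq
      | linear_combination (-2:ℂ)*h2sq

lemma nupm (γ : ℝ) (hγ : 2 ≤ γ) : proj2 (νm γ) + proj2 (νp γ) = 1 := by
  have hγ0 : (0:ℝ) ≤ γ := by linarith
  have hsp : 0 < Real.sqrt (1 + γ^2) := Real.sqrt_pos.2 (by nlinarith)
  have hxle : γ / (2 * Real.sqrt (1 + γ^2)) ≤ 1/2 := by
    rw [div_le_iff₀ (by positivity)]
    have h := Real.sqrt_le_sqrt (show γ^2 ≤ 1 + γ^2 by nlinarith)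
    have := Real.sqrt_sq hγ0
    nlinarith
  have hx0 : 0 ≤ γ / (2 * Real.sqrt (1 + γ^2)) := by positivity
  have hab : ((Real.sqrt (1/2 + γ / (2 * Real.sqrt (1 + γ^2))) : ℝ) : ℂ)^2
           + ((Real.sqrt (1/2 - γ / (2 * Real.sqrt (1 + γ^2))) : ℝ) : ℂ)^2 = 1 := by
    rw [← Complex.ofReal_pow, ← Complex.ofReal_pow, ← Complex.ofReal_add,
      Real.sq_sqrt (by linarith), Real.sq_sqrt (by linarith)]
    norm_num
  ext i j
  fin_cases i <;> fin_cases j <;>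
    simp only [proj2, νm, νp, Matrix.one_apply, Matrix.add_apply, Matrix.of_apply,
      Matrix.cons_val', Matrix.cons_val_zero, Matrix.cons_val_one, Matrix.head_cons,
      Matrix.empty_val', Matrix.cons_val_fin_one, Fin.isValue, star_neg,
      Complex.star_def, Complex.conj_ofReal, Fin.zero_eta, Fin.mk_one, if_true, if_false] <;>
    (try norm_num) <;>
    first
      | ring1
      | linear_combination hab
      | linear_combination -hab


/-- the four nonzero elements M₍₀,?₎, M₍₁,?₎, M₍?,₊₎, M₍?,₋₎ (all other
five elements zero) form a POVM satisfying the error-free condition with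
post-measurement information for Example 2. -/
theorem stmt_13 (γ : ℝ) (hγ : 2 ≤ γ) :
    (proj2 (νm γ) ⊗ₖ proj2 ket0).PosSemidef ∧
    (proj2 (νm γ) ⊗ₖ proj2 ket1).PosSemidef ∧
    (proj2 (νp γ) ⊗ₖ proj2 ketP).PosSemidef ∧
    (proj2 (νp γ) ⊗ₖ proj2 ketM).PosSemidef ∧
    proj2 (νm γ) ⊗ₖ proj2 ket0 + proj2 (νm γ) ⊗ₖ proj2 ket1
      + proj2 (νp γ) ⊗ₖ proj2 ketP + proj2 (νp γ) ⊗ₖ proj2 ketM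
      + 0 + 0 + 0 + 0 + 0 = 1 ∧
    expVal ψ1 (proj2 (νm γ) ⊗ₖ proj2 ket0) = 0 ∧
    expVal ψ0 (proj2 (νm γ) ⊗ₖ proj2 ket1) = 0 ∧
    expVal ψM (proj2 (νp γ) ⊗ₖ proj2 ketP) = 0 ∧
    expVal ψP (proj2 (νp γ) ⊗ₖ proj2 ketM) = 0 := by
  refine ⟨proj_kron_psd _ _, proj_kron_psd _ _, proj_kron_psd _ _, proj_kron_psd _ _, ?_,
    ?_, ?_, ?_, ?_⟩
  · have h1 : proj2 (νm γ) ⊗ₖ proj2 ket0 + proj2 (νm γ) ⊗ₖ proj2 ket1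
        = proj2 (νm γ) ⊗ₖ (1 : Op2) := by
      rw [← Matrix.kronecker_add, ket01]
    have h2 : proj2 (νp γ) ⊗ₖ proj2 ketP + proj2 (νp γ) ⊗ₖ proj2 ketM
        = proj2 (νp γ) ⊗ₖ (1 : Op2) := by
      rw [← Matrix.kronecker_add, ketPM]
    simp only [add_zero]
    rw [h1, add_assoc, h2, ← Matrix.add_kronecker, nupm γ hγ, Matrix.one_kronecker_one]
  all_goals
    simp [expVal, Matrix.mulVec, dotProduct, Fintype.sum_prod_type, Fin.sum_univ_succ,
      ψ0, ψ1, ψP, ψM, tens, proj2, ket0, ket1, ketP, ketM, νm, νp]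
  all_goals try ring
end
end

section
/- With the POVM of the previous statement and priors η₀=η₁=γ/(2(1+γ)), η₊=η₋=1/(2(1+γ)) (γ≥2), the success probability η₀⟨φ₀|M₍₀,?₎|φ₀⟩ + η₁⟨φ₁|M₍₁,?₎|φ₁⟩ + η₊⟨φ₊|M₍?,₊₎|φ₊⟩ + η₋⟨φ₋|M₍?,₋₎|φ₋⟩ equals (1/2)(1 + √(1+γ²)/(1+γ)). -/
open Matrix Complex
open scoped Matrix Kronecker ComplexOrder

noncomputable section

lemma expVal_tens (a b u v : Q2) :
    expVal (tens a b) (proj2 u ⊗ₖ proj2 v)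
      = ((star a ⬝ᵥ u) * (star u ⬝ᵥ a)) * ((star b ⬝ᵥ v) * (star v ⬝ᵥ b)) := by
  simp only [expVal, tens, proj2, dotProduct, Matrix.mulVec,
    Fintype.sum_prod_type, Fin.sum_univ_two, Matrix.kroneckerMap_apply,
    Matrix.of_apply, Pi.star_apply, star_mul']
  ring

set_option maxHeartbeats 1000000 in
/-- the success probability of the PI-assisted LOCC POVM of
Statement 13 equals (1/2)(1 + √(1+γ²)/(1+γ)). -/
theorem stmt_14 (γ : ℝ) (hγ : 2 ≤ γ) :
    (γ / (2 * (1 + γ))) * (expVal ψ0 (proj2 (νm γ) ⊗ₖ proj2 ket0)).re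
      + (γ / (2 * (1 + γ))) * (expVal ψ1 (proj2 (νm γ) ⊗ₖ proj2 ket1)).re
      + (1 / (2 * (1 + γ))) * (expVal ψP (proj2 (νp γ) ⊗ₖ proj2 ketP)).re
      + (1 / (2 * (1 + γ))) * (expVal ψM (proj2 (νp γ) ⊗ₖ proj2 ketM)).re
      = (1 / 2) * (1 + Real.sqrt (1 + γ^2) / (1 + γ)) := by
  have hs : (0:ℝ) < Real.sqrt (1 + γ^2) := Real.sqrt_pos.mpr (by nlinarith)
  set s := Real.sqrt (1 + γ^2) with hsdef
  have hs2 : s^2 = 1 + γ^2 := Real.sq_sqrt (by nlinarith)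
  set x := γ / (2 * s) with hxdef
  have hx0 : 0 ≤ x := by positivity
  have hγs : γ ≤ s := by nlinarith
  have hx12 : x ≤ 1/2 := by
    rw [hxdef, div_le_iff₀ (by linarith)]; linarith
  set p := Real.sqrt (1/2 + x) with hpdef
  set m := Real.sqrt (1/2 - x) with hmdef
  have hp2 : p^2 = 1/2 + x := Real.sq_sqrt (by linarith)
  have hm2 : m^2 = 1/2 - x := Real.sq_sqrt (by linarith)
  have hp0 : 0 ≤ p := Real.sqrt_nonneg _
  have hm0 : 0 ≤ m := Real.sqrt_nonneg _
  have hpm : p * m = 1 / (2 * s) := by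
    have hx2 : x^2 * (4 * s^2) = γ^2 := by rw [hxdef]; field_simp; ring
    have h1 : (p*m)^2 = (1/(2*s))^2 := by
      have e : (p*m)^2 = (1/2+x)*(1/2-x) := by rw [← hp2, ← hm2]; ring
      rw [e]; field_simp; nlinarith
    have h3 : (p*m - 1/(2*s)) * (p*m + 1/(2*s)) = 0 := by linear_combination h1
    rcases mul_eq_zero.mp h3 with h | h
    · linarith
    · have : (0:ℝ) < 1/(2*s) := by positivity
      nlinarith [mul_nonneg hp0 hm0]
  have hνm : νm γ = ![(p:ℂ), -(m:ℂ)] := by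
    rw [hpdef, hmdef, hxdef, hsdef]; rfl
  have hνp : νp γ = ![(m:ℂ), (p:ℂ)] := by
    rw [hpdef, hmdef, hxdef, hsdef]; rfl
  have h2c : ((Real.sqrt 2 : ℝ) : ℂ) * ((Real.sqrt 2 : ℝ) : ℂ) = 2 := by
    rw [← Complex.ofReal_mul, Real.mul_self_sqrt (by norm_num : (0:ℝ) ≤ 2)]; norm_num
  have h2ne : ((Real.sqrt 2 : ℝ) : ℂ) ≠ 0 := by
    intro h; rw [h] at h2c; simp at h2c
  have e0 : (expVal ψ0 (proj2 (νm γ) ⊗ₖ proj2 ket0)).re = p^2 := by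
    rw [show ψ0 = tens ket0 ket0 from rfl, expVal_tens, hνm]
    simp [ket0, dotProduct, Fin.sum_univ_two]
    ring
  have e1 : (expVal ψ1 (proj2 (νm γ) ⊗ₖ proj2 ket1)).re = p^2 := by
    rw [show ψ1 = tens ket0 ket1 from rfl, expVal_tens, hνm]
    simp [ket0, ket1, dotProduct, Fin.sum_univ_two]
    ring
  have eP : (expVal ψP (proj2 (νp γ) ⊗ₖ proj2 ketP)).re = 1/2 + p*m := by
    rw [show ψP = tens ketP ketP from rfl, expVal_tens, hνp]
    have hmp : m^2 + p^2 = 1 := by rw [hp2, hm2]; ring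
    simp only [ketP, ket0, ket1, dotProduct, Fin.sum_univ_two, Pi.star_apply,
      Pi.smul_apply, Pi.add_apply, smul_eq_mul, star_mul', Complex.star_def,
      Complex.conj_ofReal, map_inv₀, Matrix.cons_val_zero, Matrix.cons_val_one,
      Matrix.head_cons]
    field_simp
    have h6 : ((Real.sqrt 2 : ℝ) : ℂ)^6 = 8 := by
      simp only [pow_succ, pow_zero, one_mul]
      linear_combination (((Real.sqrt 2 : ℝ) : ℂ)^4 + 2*((Real.sqrt 2 : ℝ) : ℂ)^2 + 4) * h2c
    simp only [map_add, map_sub, map_one, map_zero, add_zero, zero_add, sub_zero, zero_sub,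
      one_mul, map_neg, neg_mul_neg, mul_one, h6]
    have hred : ((m:ℂ)+p)*((m:ℂ)+p)*(1+1)^2/8
        = (((m+p)*(m+p)/2 : ℝ) : ℂ) := by push_cast; ring
    rw [hred, Complex.ofReal_re]
    nlinarith [hmp]
  have eM : (expVal ψM (proj2 (νp γ) ⊗ₖ proj2 ketM)).re = 1/2 + p*m := by
    rw [show ψM = tens ketP ketM from rfl, expVal_tens, hνp]
    simp only [ketP, ketM, ket0, ket1, dotProduct, Fin.sum_univ_two, Pi.star_apply,
      Pi.smul_apply, Pi.add_apply, Pi.sub_apply, smul_eq_mul, star_mul', Complex.star_def,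
      Complex.conj_ofReal, map_inv₀, Matrix.cons_val_zero, Matrix.cons_val_one,
      Matrix.head_cons]
    have hmp : m^2 + p^2 = 1 := by rw [hp2, hm2]; ring
    field_simp
    have h6 : ((Real.sqrt 2 : ℝ) : ℂ)^6 = 8 := by
      simp only [pow_succ, pow_zero, one_mul]
      linear_combination (((Real.sqrt 2 : ℝ) : ℂ)^4 + 2*((Real.sqrt 2 : ℝ) : ℂ)^2 + 4) * h2c
    simp only [map_add, map_sub, map_one, map_zero, add_zero, zero_add, sub_zero, zero_sub,
      one_mul, map_neg, neg_mul_neg, mul_one, h6]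
    have hred : ((m:ℂ)+p)*((m:ℂ)+p)*(1+1)^2/8
        = (((m+p)*(m+p)/2 : ℝ) : ℂ) := by push_cast; ring
    rw [hred, Complex.ofReal_re]
    nlinarith [hmp]
  rw [e0, e1, eP, eM, hp2, hpm, hxdef]
  have h1γ : (0:ℝ) < 1 + γ := by linarith
  field_simp
  nlinarith [hs2, hs, h1γ]
end
end

section
/- For the states |φ₀⟩=|00⟩, |φ₁⟩=|01⟩, |φ₊⟩=|+⟩⊗|+⟩, |φ₋⟩=|+⟩⊗|−⟩, and any pair (ω₀,ω₁)∈{0,1}×{+,−}, there is no nonzero product vector |v⟩=|a⟩⊗|b⟩ in ℂ²⊗ℂ² with ⟨φ_{ω₀}|v⟩≠0, ⟨φ_{ω₁}|v⟩≠0, and ⟨φⱼ|v⟩=0 for both j ∉ {ω₀,ω₁}. -/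
open Matrix Complex
open scoped Matrix Kronecker ComplexOrder

noncomputable section

lemma ip_tens (x y a b : Q2) :
    ip4 (tens x y) (tens a b) = (star x ⬝ᵥ a) * (star y ⬝ᵥ b) := by
  simp [ip4, tens, dotProduct, Fintype.sum_prod_type, Fin.sum_univ_two]
  ring

lemma dp0 (a : Q2) : star ket0 ⬝ᵥ a = a 0 := by
  simp [ket0, dotProduct, Fin.sum_univ_two]

lemma dp1 (a : Q2) : star ket1 ⬝ᵥ a = a 1 := by
  simp [ket1, dotProduct, Fin.sum_univ_two]

lemma s2ne : (Real.sqrt 2 : ℂ) ≠ 0 := by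
  exact_mod_cast Complex.ofReal_ne_zero.2 (Real.sqrt_ne_zero'.2 (by norm_num))

lemma dpP (a : Q2) : star ketP ⬝ᵥ a = (Real.sqrt 2 : ℂ)⁻¹ * (a 0 + a 1) := by
  simp [ketP, ket0, ket1, dotProduct, Fin.sum_univ_two, ← Complex.ofReal_inv]
  ring

lemma dpM (a : Q2) : star ketM ⬝ᵥ a = (Real.sqrt 2 : ℂ)⁻¹ * (a 0 - a 1) := by
  simp [ketM, ket0, ket1, dotProduct, Fin.sum_univ_two, ← Complex.ofReal_inv]
  ring

/-- for every (ω₀,ω₁)∈{0,1}×{+,−} there is no nonzero product vector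
that overlaps both φ_{ω₀}, φ_{ω₁} and is orthogonal to the other two states. -/
theorem stmt_15 (ω0 ω1 : Fin 2) :
    ¬ ∃ a b : Q2, tens a b ≠ 0 ∧
      ip4 (![ψ0, ψ1] ω0) (tens a b) ≠ 0 ∧
      ip4 (![ψP, ψM] ω1) (tens a b) ≠ 0 ∧
      (∀ i : Fin 2, i ≠ ω0 → ip4 (![ψ0, ψ1] i) (tens a b) = 0) ∧
      (∀ j : Fin 2, j ≠ ω1 → ip4 (![ψP, ψM] j) (tens a b) = 0) := by
  rintro ⟨a, b, hv, h2, h3, h4, h5⟩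
  have s2 : ((Real.sqrt 2 : ℂ)⁻¹) ≠ 0 := inv_ne_zero s2ne
  fin_cases ω0 <;> fin_cases ω1 <;>
    [ (have o1 := h4 1 (by decide); have o2 := h5 1 (by decide));
      (have o1 := h4 1 (by decide); have o2 := h5 0 (by decide));
      (have o1 := h4 0 (by decide); have o2 := h5 1 (by decide));
      (have o1 := h4 0 (by decide); have o2 := h5 0 (by decide)) ] <;>
  · simp only [show ((⟨0, by norm_num⟩ : Fin 2) = 0) from rfl,
      show ((⟨1, by norm_num⟩ : Fin 2) = 1) from rfl,
      Matrix.cons_val_zero, Matrix.cons_val_one, Matrix.head_cons,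
      ψ0, ψ1, ψP, ψM, ip_tens, dp0, dp1, dpP, dpM] at h2 h3 o1 o2
    rcases mul_ne_zero_iff.1 h2 with ⟨ha0, hb⟩
    rcases mul_ne_zero_iff.1 h3 with ⟨hap, hbp⟩
    have hbo := (mul_eq_zero.1 o1).resolve_left ha0
    have hso := (mul_eq_zero.1 o2).resolve_left hap
    have hs := (mul_eq_zero.1 hso).resolve_left s2
    first
      | exact hb (by linear_combination hs + hbo)
      | exact hb (by linear_combination hs - hbo)
      | exact hb (by linear_combination hbo - hs)
end
end
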